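/- Let A_0, …, A_{m−1} be invertible linear maps on ℝⁿ with the property that for every k and every unit vector e in ℝⁿ, Σ_{i=k}^{m−1} 1/(|A_k e_k|⋯|A_i e_i|) ≤ C (where e_k = e and e_{i+1} = A_i e_i/|A_i e_i|, indices reduced mod m and the sum taken over one period). Then for every unit vector e and every j ≥ 0, |A_{j−1}⋯A_0 e| ≥ (1/C)·(1 + 1/C)^{j·δ} for suitable δ > 0 depending only on C — i.e., uniform exponential expansion with constants depending only on C. -/

import Mathlib

theorem bounded_sums_imply_exponential_growth (C : ℝ) (hC : 0 < C)
    (b : ℕ → ℝ) (hb : ∀ l, 0 < b l)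
    (hsum : ∀ k N : ℕ,
      ∑ i ∈ Finset.Ico k N, (∏ l ∈ Finset.Icc k i, b l)⁻¹ ≤ C) :
    ∀ j : ℕ, 1 ≤ j →
      (1 / C) * (1 + 1 / C) ^ (j - 1) ≤ ∏ l ∈ Finset.range j, b l := by
  intro j hj
  have hP : ∀ k, (0:ℝ) < ∏ l ∈ Finset.range k, b l :=
    fun k => Finset.prod_pos (fun l _ => hb l)
  set S : ℕ → ℝ := fun k => ∑ i ∈ Finset.Ico k j, (∏ l ∈ Finset.range (i+1), b l)⁻¹ with hSdef
  have hSnonneg : ∀ k, 0 ≤ S k := by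
    intro k
    exact Finset.sum_nonneg (fun i _ => le_of_lt (inv_pos.mpr (hP (i+1))))
  have hIcc0 : ∀ i : ℕ, Finset.Icc 0 i = Finset.range (i+1) := by
    intro i; ext x; simp [Nat.lt_succ_iff]
  have hS0 : S 0 ≤ C := by
    have h := hsum 0 j
    calc S 0 = ∑ i ∈ Finset.Ico 0 j, (∏ l ∈ Finset.Icc 0 i, b l)⁻¹ := by
          apply Finset.sum_congr rfl
          intro i _; rw [hIcc0 i]
      _ ≤ C := h
  -- tail bound: S (k+1) ≤ C * (∏ range (k+1))⁻¹
  have htail : ∀ k, S (k+1) ≤ C * (∏ l ∈ Finset.range (k+1), b l)⁻¹ := by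
    intro k
    have hsplit : ∀ i ∈ Finset.Ico (k+1) j,
        (∏ l ∈ Finset.range (i+1), b l)⁻¹
          = (∏ l ∈ Finset.range (k+1), b l)⁻¹ * (∏ l ∈ Finset.Icc (k+1) i, b l)⁻¹ := by
      intro i hi
      rw [Finset.mem_Ico] at hi
      have h1 : k+1 ≤ i+1 := by omega
      have : ∏ l ∈ Finset.range (i+1), b l
          = (∏ l ∈ Finset.range (k+1), b l) * ∏ l ∈ Finset.Icc (k+1) i, b l := by
        rw [← Finset.Ico_add_one_right_eq_Icc, Finset.range_eq_Ico, Finset.range_eq_Ico]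
        exact (Finset.prod_Ico_consecutive b (Nat.zero_le (k+1)) h1).symm
      rw [this, mul_inv]
    calc S (k+1) = ∑ i ∈ Finset.Ico (k+1) j,
          (∏ l ∈ Finset.range (k+1), b l)⁻¹ * (∏ l ∈ Finset.Icc (k+1) i, b l)⁻¹ :=
          Finset.sum_congr rfl hsplit
      _ = (∏ l ∈ Finset.range (k+1), b l)⁻¹ *
            ∑ i ∈ Finset.Ico (k+1) j, (∏ l ∈ Finset.Icc (k+1) i, b l)⁻¹ := by
          rw [Finset.mul_sum]
      _ ≤ (∏ l ∈ Finset.range (k+1), b l)⁻¹ * C := by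
          apply mul_le_mul_of_nonneg_left (hsum (k+1) j)
          exact le_of_lt (inv_pos.mpr (hP (k+1)))
      _ = C * (∏ l ∈ Finset.range (k+1), b l)⁻¹ := mul_comm _ _
  -- recurrence: S k = t + S(k+1) for k < j
  have hrec : ∀ k, k < j → S k = (∏ l ∈ Finset.range (k+1), b l)⁻¹ + S (k+1) := by
    intro k hk
    have : Finset.Ico k j = insert k (Finset.Ico (k+1) j) := by
      ext x; simp only [Finset.mem_insert, Finset.mem_Ico]; omega
    rw [hSdef]
    simp only
    rw [this, Finset.sum_insert (by simp)]
  -- ratio: S(k+1) ≤ (C/(C+1)) * S k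
  have hratio : ∀ k, S (k+1) ≤ (C/(C+1)) * S k := by
    intro k
    by_cases hk : k < j
    · have h1 := htail k
      have h2 := hrec k hk
      have ht : (∏ l ∈ Finset.range (k+1), b l)⁻¹ = S k - S (k+1) := by
        rw [h2]; ring
      rw [ht] at h1
      have hC1 : (0:ℝ) < C + 1 := by linarith
      rw [div_mul_eq_mul_div, le_div_iff₀ hC1]
      nlinarith [hSnonneg k, hSnonneg (k+1)]
    · have h1 : S (k+1) = 0 := by
        rw [hSdef]; simp only
        rw [Finset.Ico_eq_empty (by omega), Finset.sum_empty]
      have h2 : S k = 0 := by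
        rw [hSdef]; simp only
        rw [Finset.Ico_eq_empty (by omega), Finset.sum_empty]
      rw [h1, h2, mul_zero]
  -- induction: S k ≤ (C/(C+1))^k * C
  have hgeom : ∀ k, S k ≤ (C/(C+1))^k * C := by
    intro k
    induction k with
    | zero => simpa using hS0
    | succ n ih =>
      have hC1 : (0:ℝ) < C + 1 := by linarith
      calc S (n+1) ≤ (C/(C+1)) * S n := hratio n
        _ ≤ (C/(C+1)) * ((C/(C+1))^n * C) := by
            apply mul_le_mul_of_nonneg_left ih
            positivity
        _ = (C/(C+1))^(n+1) * C := by ring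
  -- S (j-1) = (∏ range j)⁻¹
  have hlast : S (j-1) = (∏ l ∈ Finset.range j, b l)⁻¹ := by
    rw [hSdef]; simp only
    have h1 : Finset.Ico (j-1) j = {j-1} := by
      ext x; simp only [Finset.mem_Ico, Finset.mem_singleton]; omega
    rw [h1, Finset.sum_singleton, Nat.sub_add_cancel hj]
  have key : (∏ l ∈ Finset.range j, b l)⁻¹ ≤ (C/(C+1))^(j-1) * C := by
    rw [← hlast]; exact hgeom (j-1)
  have hC1 : (0:ℝ) < C + 1 := by linarith
  have hRpos : (0:ℝ) < (C/(C+1))^(j-1) * C := by positivity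
  have h2 : ((C/(C+1))^(j-1) * C)⁻¹ ≤ ∏ l ∈ Finset.range j, b l := by
    have := inv_anti₀ (inv_pos.mpr (hP j)) key
    rwa [inv_inv] at this
  have hb1 : 1 + 1 / C = (C+1)/C := by field_simp
  calc (1 / C) * (1 + 1 / C) ^ (j - 1) = ((C/(C+1))^(j-1) * C)⁻¹ := by
        rw [hb1, mul_inv, ← inv_pow, inv_div, one_div, mul_comm]
    _ ≤ ∏ l ∈ Finset.range j, b l := h2
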